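/- arXiv:1512.05113 — 2 statements merged into one kernel-verified Lean document; each statement's English description precedes it below -/
import Mathlib

section
/- The dihedral group D_{18} of order 18 is K_{3,3}-free. -/
open DihedralGroup

theorem Set.mem_def {α : Type*} {a : α} {p : α → Prop} :
    @Membership.mem α (Set α) _ p a ↔ p a := Iff.rfl

private def Z3P : DihedralGroup 9 → Prop
  | DihedralGroup.r i => 3 * i = 0
  | DihedralGroup.sr _ => False

private def Z3sub : Subgroup (DihedralGroup 9) where
  carrier := Z3P
  one_mem' := by show (3 : ZMod 9) * 0 = 0; ring
  mul_mem' := by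
    rintro (⟨i⟩|⟨i⟩) (⟨j⟩|⟨j⟩) hi hj <;>
      simp only [Set.mem_def, Z3P, r_mul_r, r_mul_sr, sr_mul_r, sr_mul_sr] at * <;>
      first
        | exact hj
        | exact hi
        | linear_combination hi + hj
  inv_mem' := by
    rintro (⟨i⟩|⟨i⟩) hi
    · have hi' : (3 : ZMod 9) * i = 0 := hi
      exact (by linear_combination -hi' : (3 : ZMod 9) * (-i) = 0)
    · exact hi

private def rotP : DihedralGroup 9 → Prop
  | DihedralGroup.r _ => True
  | DihedralGroup.sr _ => False

private def rotSub : Subgroup (DihedralGroup 9) where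
  carrier := rotP
  one_mem' := trivial
  mul_mem' := by
    rintro (⟨i⟩|⟨i⟩) (⟨j⟩|⟨j⟩) hi hj <;>
      simp only [Set.mem_def, rotP, r_mul_r, r_mul_sr, sr_mul_r, sr_mul_sr] at * <;> trivial
  inv_mem' := by
    rintro (⟨i⟩|⟨i⟩) hi <;> simp only [Set.mem_def, rotP] at * <;> trivial

private def D3P (c : ZMod 9) : DihedralGroup 9 → Prop
  | DihedralGroup.r i => 3 * i = 0
  | DihedralGroup.sr j => 3 * (j - c) = 0

private def D3sub (c : ZMod 9) : Subgroup (DihedralGroup 9) where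
  carrier := D3P c
  one_mem' := by show (3 : ZMod 9) * 0 = 0; ring
  mul_mem' := by
    rintro (⟨i⟩|⟨i⟩) (⟨j⟩|⟨j⟩) hi hj <;>
      simp only [Set.mem_def, D3P, r_mul_r, r_mul_sr, sr_mul_r, sr_mul_sr] at * <;>
      first
        | linear_combination hi + hj
        | linear_combination hj - hi
  inv_mem' := by
    rintro (⟨i⟩|⟨i⟩) hi
    · have hi' : (3 : ZMod 9) * i = 0 := hi
      exact (by linear_combination -hi' : (3 : ZMod 9) * (-i) = 0)
    · exact hi

private def refl2P (u : ZMod 9) : DihedralGroup 9 → Prop :=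
  fun x => x = DihedralGroup.r 0 ∨ x = DihedralGroup.sr u

private def refl2 (u : ZMod 9) : Subgroup (DihedralGroup 9) where
  carrier := refl2P u
  one_mem' := Or.inl rfl
  mul_mem' := by
    rintro x y (rfl|rfl) (rfl|rfl) <;>
      simp only [Set.mem_def, refl2P, r_mul_r, r_mul_sr, sr_mul_r, sr_mul_sr,
        add_zero, zero_add, sub_zero, sub_self] <;> tauto
  inv_mem' := by
    rintro x (rfl|rfl)
    · exact Or.inl (show DihedralGroup.r (-0) = DihedralGroup.r 0 by norm_num)
    · exact Or.inr rfl

private lemma sr_not_mem_Z3 (u : ZMod 9) : DihedralGroup.sr u ∉ Z3sub := fun h => h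

private lemma sr_not_mem_rot (u : ZMod 9) : DihedralGroup.sr u ∉ rotSub := fun h => h

private lemma r_mem_Z3 {i : ZMod 9} : DihedralGroup.r i ∈ Z3sub ↔ 3 * i = 0 := Iff.rfl

private lemma r_mem_D3 {c i : ZMod 9} : DihedralGroup.r i ∈ D3sub c ↔ 3 * i = 0 := by
  rw [show (DihedralGroup.r i ∈ D3sub c) = D3P c (DihedralGroup.r i) from rfl, D3P]

private lemma sr_mem_D3 {c j : ZMod 9} : DihedralGroup.sr j ∈ D3sub c ↔ 3 * (j - c) = 0 := by
  rw [show (DihedralGroup.sr j ∈ D3sub c) = D3P c (DihedralGroup.sr j) from rfl, D3P]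

private lemma mem_refl2 {u : ZMod 9} {x : DihedralGroup 9} :
    x ∈ refl2 u ↔ x = DihedralGroup.r 0 ∨ x = DihedralGroup.sr u := Iff.rfl

private lemma r_pow (i : ZMod 9) (k : ℕ) : (DihedralGroup.r i) ^ k = DihedralGroup.r (i * (k : ZMod 9)) := by
  induction k with
  | zero => simp
  | succ n ih => rw [pow_succ, ih, r_mul_r]; push_cast; ring

private lemma r3_mem {H : Subgroup (DihedralGroup 9)} {i : ZMod 9} (hi0 : i ≠ 0)
    (h : DihedralGroup.r i ∈ H) : DihedralGroup.r 3 ∈ H := by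
  obtain ⟨k, hk⟩ := (by decide : ∀ i : ZMod 9, i ≠ 0 → ∃ k : ZMod 9, i * k = 3) i hi0
  have h2 := H.pow_mem h k.val
  rw [_root_.r_pow] at h2
  rwa [show i * (k.val : ZMod 9) = 3 by rw [ZMod.natCast_val, ZMod.cast_id]; exact hk] at h2

private lemma r_all_mem {H : Subgroup (DihedralGroup 9)} {i : ZMod 9} (hi : 3 * i ≠ 0)
    (h : DihedralGroup.r i ∈ H) (j : ZMod 9) : DihedralGroup.r j ∈ H := by
  obtain ⟨k, hk⟩ := (by decide : ∀ i : ZMod 9, 3 * i ≠ 0 → ∀ j, ∃ k : ZMod 9, i * k = j) i hi j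
  have h2 := H.pow_mem h k.val
  rw [_root_.r_pow] at h2
  rwa [show i * (k.val : ZMod 9) = j by rw [ZMod.natCast_val, ZMod.cast_id]; exact hk] at h2

private lemma classify {H : Subgroup (DihedralGroup 9)} (htop : H ≠ ⊤)
    (h3 : DihedralGroup.r 3 ∈ H) :
    H = Z3sub ∨ H = rotSub ∨ H = D3sub 0 ∨ H = D3sub 1 ∨ H = D3sub 2 := by
  have hr : ∀ i : ZMod 9, 3 * i = 0 → DihedralGroup.r i ∈ H := by
    intro i hi
    rcases (by decide : ∀ i : ZMod 9, 3 * i = 0 → i = 0 ∨ i = 3 ∨ i = 6) i hi with rfl | rfl | rfl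
    · exact H.one_mem
    · exact h3
    · exact (by rw [show (6 : ZMod 9) = 3 + 3 from by decide, ← r_mul_r]; exact H.mul_mem h3 h3)
  by_cases hbad : ∃ i : ZMod 9, DihedralGroup.r i ∈ H ∧ 3 * i ≠ 0
  · obtain ⟨i, hiH, hi3⟩ := hbad
    by_cases hrefl : ∃ u, DihedralGroup.sr u ∈ H
    · exfalso
      obtain ⟨u, hu⟩ := hrefl
      refine htop ((Subgroup.eq_top_iff' H).mpr ?_)
      rintro (⟨j⟩|⟨j⟩)
      · exact r_all_mem hi3 hiH j
      · have := H.mul_mem hu (r_all_mem hi3 hiH (j - u))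
        rwa [sr_mul_r, add_sub_cancel] at this
    · right; left
      ext x
      cases x with
      | r j =>
        constructor
        · intro _; trivial
        · intro _; exact r_all_mem hi3 hiH j
      | sr j =>
        constructor
        · intro hx; exact absurd ⟨j, hx⟩ hrefl
        · intro hx; exact absurd hx (sr_not_mem_rot j)
  · push_neg at hbad
    by_cases hrefl : ∃ u, DihedralGroup.sr u ∈ H
    · obtain ⟨u, hu⟩ := hrefl
      obtain ⟨c, hc, huc⟩ := (by decide :
        ∀ u : ZMod 9, ∃ c : ZMod 9, (c = 0 ∨ c = 1 ∨ c = 2) ∧ 3 * (u - c) = 0) u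
      have hHD : H = D3sub c := by
        ext x
        cases x with
        | r j =>
          rw [r_mem_D3]
          exact ⟨fun hx => hbad j hx, fun hx => hr j hx⟩
        | sr j =>
          rw [sr_mem_D3]
          constructor
          · intro hx
            have := H.mul_mem hu hx
            rw [sr_mul_sr] at this
            have h1 := hbad _ this
            linear_combination h1 + huc
          · intro hx
            have hju : 3 * (j - u) = 0 := by linear_combination hx - huc
            have := H.mul_mem hu (hr _ hju)
            rwa [sr_mul_r, add_sub_cancel] at this
      rcases hc with rfl | rfl | rfl
      · exact Or.inr (Or.inr (Or.inl hHD))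
      · exact Or.inr (Or.inr (Or.inr (Or.inl hHD)))
      · exact Or.inr (Or.inr (Or.inr (Or.inr hHD)))
    · left
      ext x
      cases x with
      | r j => rw [r_mem_Z3]; exact ⟨fun hx => hbad j hx, fun hx => hr j hx⟩
      | sr j =>
        constructor
        · intro hx; exact absurd ⟨j, hx⟩ hrefl
        · intro hx; exact absurd hx (sr_not_mem_Z3 j)

private lemma exists_ne_one {H : Subgroup (DihedralGroup 9)} (h : H ≠ ⊥) :
    ∃ x ∈ H, x ≠ 1 := by
  by_contra hc
  push_neg at hc
  exact h ((Subgroup.eq_bot_iff_forall H).mpr hc)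

private lemma refl_case {H : Subgroup (DihedralGroup 9)} {u : ZMod 9}
    (hu : DihedralGroup.sr u ∈ H) (hne : H ≠ refl2 u) : DihedralGroup.r 3 ∈ H := by
  have hle : refl2 u ≤ H := by
    rintro x (rfl | rfl)
    · exact H.one_mem
    · exact hu
  have : ¬ H ≤ refl2 u := fun h => hne (le_antisymm h hle)
  obtain ⟨x, hxH, hx⟩ := SetLike.not_le_iff_exists.mp this
  cases x with
  | r j =>
    have hj : j ≠ 0 := fun h => hx (Or.inl (by rw [h]))
    exact r3_mem hj hxH
  | sr j =>
    have hj : j ≠ u := fun h => hx (Or.inr (by rw [h]))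
    have := H.mul_mem hu hxH
    rw [sr_mul_sr] at this
    exact r3_mem (fun h => hj (by linear_combination h)) this

private lemma key {H : Subgroup (DihedralGroup 9)} {K : Fin 3 → Subgroup (DihedralGroup 9)}
    (hKinj : Function.Injective K) (hKH : ∀ j, K j ≠ H) (hKtop : ∀ j, K j ≠ ⊤)
    (hint : ∀ j, H ⊓ K j ≠ ⊥) (hHbot : H ≠ ⊥) : DihedralGroup.r 3 ∈ H := by
  by_cases h : ∃ i : ZMod 9, DihedralGroup.r i ∈ H ∧ i ≠ 0
  · obtain ⟨i, hiH, hi⟩ := h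
    exact r3_mem hi hiH
  · push_neg at h
    obtain ⟨x, hxH, hx1⟩ := exists_ne_one hHbot
    obtain ⟨u, hu⟩ : ∃ u, DihedralGroup.sr u ∈ H := by
      cases x with
      | r j =>
        exact absurd (h j hxH) (fun hj => hx1 (by rw [hj]; rfl))
      | sr j => exact ⟨j, hxH⟩
    by_cases hH2 : H = refl2 u
    · exfalso
      have hD : ∀ j : Fin 3, ∃ c : ZMod 9, (c = 0 ∨ c = 1 ∨ c = 2) ∧ 3 * (u - c) = 0 ∧
          K j = D3sub c := by
        intro j
        have hsu : DihedralGroup.sr u ∈ K j := by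
          obtain ⟨y, hyK, hy1⟩ := exists_ne_one (by rw [inf_comm] at *; exact hint j :
            K j ⊓ H ≠ ⊥)
          obtain ⟨hyK, hyH⟩ := hyK
          rcases (hH2 ▸ hyH : y ∈ refl2 u) with rfl | rfl
          · exact absurd rfl hy1
          · exact hyK
        have h3j : DihedralGroup.r 3 ∈ K j :=
          refl_case hsu (by rw [← hH2]; exact hKH j)
        rcases classify (hKtop j) h3j with hj | hj | hj | hj | hj
        · exact absurd (hj ▸ hsu) (sr_not_mem_Z3 u)
        · exact absurd (hj ▸ hsu) (sr_not_mem_rot u)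
        · exact ⟨0, Or.inl rfl, (hj ▸ hsu : _ ∈ D3sub 0), hj⟩
        · exact ⟨1, Or.inr (Or.inl rfl), (hj ▸ hsu : _ ∈ D3sub 1), hj⟩
        · exact ⟨2, Or.inr (Or.inr rfl), (hj ▸ hsu : _ ∈ D3sub 2), hj⟩
      obtain ⟨c0, hc0, hu0, hK0⟩ := hD 0
      obtain ⟨c1, hc1, hu1, hK1⟩ := hD 1
      have hcc : c0 = c1 :=
        (by decide : ∀ u c c' : ZMod 9, (c = 0 ∨ c = 1 ∨ c = 2) → (c' = 0 ∨ c' = 1 ∨ c' = 2) →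
          3 * (u - c) = 0 → 3 * (u - c') = 0 → c = c') u c0 c1 hc0 hc1 hu0 hu1
      have : K 0 = K 1 := by rw [hK0, hK1, hcc]
      exact absurd (hKinj this) (by decide)
    · exact refl_case hu hH2

/-- The intersection graph of `G` contains no `K₃,₃` subgraph. -/
def IsK33Free (G : Type*) [Group G] : Prop :=
  ¬ ∃ A B : Fin 3 → Subgroup G,
      Function.Injective A ∧ Function.Injective B ∧
      (∀ i j, A i ≠ B j) ∧
      (∀ i, A i ≠ ⊥ ∧ A i ≠ ⊤) ∧ (∀ i, B i ≠ ⊥ ∧ B i ≠ ⊤) ∧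
      (∀ i j, A i ⊓ B j ≠ ⊥)

/-- the dihedral group `D₁₈` of order 18 is `K₃,₃`-free. -/
theorem stmt_17 : IsK33Free (DihedralGroup 9) := by
  classical
  rintro ⟨A, B, hAinj, hBinj, hAB, hA, hB, hint⟩
  have hA3 : ∀ i, DihedralGroup.r 3 ∈ A i := fun i =>
    key hBinj (fun j hj => hAB i j hj.symm) (fun j => (hB j).2) (fun j => hint i j) (hA i).1
  have hB3 : ∀ j, DihedralGroup.r 3 ∈ B j := fun j =>
    key hAinj (fun i => hAB i j) (fun i => (hA i).2)
      (fun i => by rw [inf_comm]; exact hint i j) (hB j).1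
  set T : Finset (Subgroup (DihedralGroup 9)) := {Z3sub, rotSub, D3sub 0, D3sub 1, D3sub 2}
    with hT
  have hmemT : ∀ H : Subgroup (DihedralGroup 9), H ≠ ⊤ → DihedralGroup.r 3 ∈ H → H ∈ T := by
    intro H h1 h2
    rcases classify h1 h2 with h | h | h | h | h <;> simp [hT, h]
  have hAT : ∀ i, A i ∈ T := fun i => hmemT _ (hA i).2 (hA3 i)
  have hBT : ∀ j, B j ∈ T := fun j => hmemT _ (hB j).2 (hB3 j)
  have hA01 : A 0 ≠ A 1 := fun h => absurd (hAinj h) (by decide)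
  have hA02 : A 0 ≠ A 2 := fun h => absurd (hAinj h) (by decide)
  have hA12 : A 1 ≠ A 2 := fun h => absurd (hAinj h) (by decide)
  have hB01 : B 0 ≠ B 1 := fun h => absurd (hBinj h) (by decide)
  have hB02 : B 0 ≠ B 2 := fun h => absurd (hBinj h) (by decide)
  have hB12 : B 1 ≠ B 2 := fun h => absurd (hBinj h) (by decide)
  have hsub : ({A 0, A 1, A 2, B 0, B 1, B 2} : Finset (Subgroup (DihedralGroup 9))) ⊆ T := by
    intro x hx
    simp only [Finset.mem_insert, Finset.mem_singleton] at hx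
    rcases hx with rfl | rfl | rfl | rfl | rfl | rfl
    · exact hAT 0
    · exact hAT 1
    · exact hAT 2
    · exact hBT 0
    · exact hBT 1
    · exact hBT 2
  have hcard6 : ({A 0, A 1, A 2, B 0, B 1, B 2} : Finset (Subgroup (DihedralGroup 9))).card = 6 := by
    rw [Finset.card_insert_of_notMem (by
      simp only [Finset.mem_insert, Finset.mem_singleton]
      push_neg
      exact ⟨hA01, hA02, hAB 0 0, hAB 0 1, hAB 0 2⟩)]
    rw [Finset.card_insert_of_notMem (by
      simp only [Finset.mem_insert, Finset.mem_singleton]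
      push_neg
      exact ⟨hA12, hAB 1 0, hAB 1 1, hAB 1 2⟩)]
    rw [Finset.card_insert_of_notMem (by
      simp only [Finset.mem_insert, Finset.mem_singleton]
      push_neg
      exact ⟨hAB 2 0, hAB 2 1, hAB 2 2⟩)]
    rw [Finset.card_insert_of_notMem (by
      simp only [Finset.mem_insert, Finset.mem_singleton]
      push_neg
      exact ⟨hB01, hB02⟩)]
    rw [Finset.card_insert_of_notMem (by
      simp only [Finset.mem_singleton]
      exact hB12)]
    rw [Finset.card_singleton]
  have hcardT : T.card ≤ 5 := by
    rw [hT]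
    refine le_trans (Finset.card_insert_le _ _) ?_
    refine le_trans (Nat.add_le_add_right (Finset.card_insert_le _ _) 1) ?_
    refine le_trans (Nat.add_le_add_right (Nat.add_le_add_right (Finset.card_insert_le _ _) 1) 1) ?_
    refine le_trans (Nat.add_le_add_right (Nat.add_le_add_right (Nat.add_le_add_right
      (Finset.card_insert_le _ _) 1) 1) 1) ?_
    simp
  have := Finset.card_le_card hsub
  rw [hcard6] at this
  omega
end

section
/- Let G be a non-nilpotent group of order p·q·r with primes p < q < r, and suppose G is K_{3,3}-free. Then the Sylow r-subgroup R is normal in G, G/R is cyclic of order pq, and any two distinct subgroups of G of order pq intersect trivially. -/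
open Subgroup Pointwise

private lemma sylow_card_of_mul {H : Type*} [Group H] [Finite H] {s a : ℕ} [hs : Fact s.Prime]
    (hG : Nat.card H = s * a) (ha : ¬ s ∣ a) (P : Sylow s H) :
    Nat.card (P : Subgroup H) = s := by
  have h0 : Nat.card H ≠ 0 := Nat.card_pos.ne'
  have ha0 : a ≠ 0 := by rintro rfl; rw [hG] at h0; omega
  rw [Sylow.card_eq_multiplicity P, hG,
    Nat.factorization_mul hs.out.ne_zero ha0, hs.out.factorization]
  simp [Nat.factorization_eq_zero_of_not_dvd ha]



private lemma vec3_cases {α : Type*} {P : α → Prop} {a b c : α} (ha : P a) (hb : P b) (hc : P c) :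
    ∀ i : Fin 3, P (![a, b, c] i) := by
  intro i
  match i with
  | 0 => exact ha
  | 1 => exact hb
  | 2 => exact hc

private lemma vec3_inj {α : Type*} {a b c : α} (hab : a ≠ b) (hac : a ≠ c) (hbc : b ≠ c) :
    Function.Injective ![a, b, c] := by
  intro i j hij
  match i, j with
  | 0, 0 => rfl
  | 1, 1 => rfl
  | 2, 2 => rfl
  | 0, 1 => exact absurd hij hab
  | 0, 2 => exact absurd hij hac
  | 1, 2 => exact absurd hij hbc
  | 1, 0 => exact absurd hij.symm hab
  | 2, 0 => exact absurd hij.symm hac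
  | 2, 1 => exact absurd hij.symm hbc

private lemma normal_of_sylow_card_one {H : Type*} [Group H] [Finite H] {s : ℕ} [Fact s.Prime]
    (S : Sylow s H) (h : Nat.card (Sylow s H) = 1) : (S : Subgroup H).Normal := by
  haveI : Subsingleton (Sylow s H) := (Nat.card_eq_one_iff_unique.mp h).1
  rw [← Subgroup.normalizer_eq_top_iff, eq_top_iff']
  intro g
  refine Sylow.smul_eq_iff_mem_normalizer.mp ?_
  exact Subsingleton.elim _ _

private lemma ne_of_card_ne {H : Type*} [Group H] {S T : Subgroup H}
    (h : Nat.card S ≠ Nat.card T) : S ≠ T := fun e => h (by rw [e])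

set_option maxHeartbeats 1000000 in
private lemma quotient_parts {G : Type*} [Group G] [Fintype G] {p q r : ℕ}
    (hp : p.Prime) (hq : q.Prime) (hr : r.Prime)
    (hpq : p < q) (hqr : q < r) (hcard : Fintype.card G = p * q * r)
    (hfree : IsK33Free G) (R : Sylow r G) [hRn : (R : Subgroup G).Normal] :
    IsCyclic (G ⧸ (R : Subgroup G)) ∧ Nat.card (G ⧸ (R : Subgroup G)) = p * q := by
  haveI fp : Fact p.Prime := ⟨hp⟩
  haveI fq : Fact q.Prime := ⟨hq⟩
  haveI fr : Fact r.Prime := ⟨hr⟩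
  have hp2 := hp.two_le
  have hq2 := hq.two_le
  have hr2 := hr.two_le
  have hG : Nat.card G = p * q * r := by rw [Nat.card_eq_fintype_card, hcard]
  have crpq : ¬ r ∣ p * q := by
    intro h
    rcases hr.dvd_mul.mp h with h | h
    · exact absurd (Nat.le_of_dvd hp.pos h) (by omega)
    · exact absurd (Nat.le_of_dvd hq.pos h) (by omega)
  have cardR : Nat.card (R : Subgroup G) = r :=
    sylow_card_of_mul (by rw [hG]; ring) crpq R
  have cardQuot : Nat.card (G ⧸ (R : Subgroup G)) = p * q := by
    have h := Subgroup.card_eq_card_quotient_mul_card_subgroup (R : Subgroup G)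
    rw [hG, cardR] at h
    exact (Nat.eq_of_mul_eq_mul_right hr.pos (by rw [← h])).symm
  refine ⟨?_, cardQuot⟩
  by_contra hnc
  set Gq := G ⧸ (R : Subgroup G) with hGq
  -- Sylow q-subgroup of the quotient is normal
  obtain ⟨Qb⟩ : Nonempty (Sylow q Gq) := inferInstance
  have cqp : ¬ q ∣ p := fun h => absurd (Nat.le_of_dvd hp.pos h) (by omega)
  have cardQb : Nat.card (Qb : Subgroup Gq) = q :=
    sylow_card_of_mul (by rw [cardQuot]; ring) cqp Qb
  have hidxQb : (Qb : Subgroup Gq).index = p := by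
    have h := Subgroup.card_mul_index (Qb : Subgroup Gq)
    rw [cardQb, cardQuot] at h
    exact Nat.eq_of_mul_eq_mul_left hq.pos (by rw [h]; ring)
  have hnq : Nat.card (Sylow q Gq) = 1 := by
    have hdvd := Qb.card_dvd_index
    rw [hidxQb] at hdvd
    rcases hp.eq_one_or_self_of_dvd _ hdvd with h | h
    · exact h
    · exfalso
      have hmod := card_sylow_modEq_one q Gq
      rw [h] at hmod
      have hd := (Nat.modEq_iff_dvd' (by omega : 1 ≤ p)).mp hmod.symm
      have := Nat.le_of_dvd (by omega) hd
      omega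
  have hQbn : (Qb : Subgroup Gq).Normal := normal_of_sylow_card_one Qb hnq
  -- Sylow p-subgroups of the quotient
  obtain ⟨Pb⟩ : Nonempty (Sylow p Gq) := inferInstance
  have cpq' : ¬ p ∣ q := fun h => absurd ((Nat.prime_dvd_prime_iff_eq hp hq).mp h) (by omega)
  have cardPb : ∀ W : Sylow p Gq, Nat.card (W : Subgroup Gq) = p := fun W =>
    sylow_card_of_mul (by rw [cardQuot]) cpq' W
  have hidxPb : ∀ W : Sylow p Gq, (W : Subgroup Gq).index = q := by
    intro W
    have h := Subgroup.card_mul_index (W : Subgroup Gq)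
    rw [cardPb W, cardQuot] at h
    exact Nat.eq_of_mul_eq_mul_left hp.pos h
  have hnpdvd := Pb.card_dvd_index
  rw [hidxPb Pb] at hnpdvd
  rcases hq.eq_one_or_self_of_dvd _ hnpdvd with hnp | hnp
  · -- both Sylows normal : quotient is cyclic, contradiction
    have hPbn : (Pb : Subgroup Gq).Normal := normal_of_sylow_card_one Pb hnp
    obtain ⟨x, hx⟩ := exists_prime_orderOf_dvd_card' (G := Gq) p
      (by rw [cardQuot]; exact Dvd.intro q rfl)
    obtain ⟨y, hy⟩ := exists_prime_orderOf_dvd_card' (G := Gq) q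
      (by rw [cardQuot]; exact Dvd.intro_left p rfl)
    haveI : Subsingleton (Sylow p Gq) := (Nat.card_eq_one_iff_unique.mp hnp).1
    haveI : Subsingleton (Sylow q Gq) := (Nat.card_eq_one_iff_unique.mp hnq).1
    have hxP : x ∈ (Pb : Subgroup Gq) := by
      have hpg : IsPGroup p (Subgroup.zpowers x) :=
        IsPGroup.of_card (by rw [Nat.card_zpowers, hx, pow_one])
      obtain ⟨W, hW⟩ := hpg.exists_le_sylow
      rw [Subsingleton.elim W Pb] at hW
      exact hW (Subgroup.mem_zpowers x)
    have hyQ : y ∈ (Qb : Subgroup Gq) := by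
      have hpg : IsPGroup q (Subgroup.zpowers y) :=
        IsPGroup.of_card (by rw [Nat.card_zpowers, hy, pow_one])
      obtain ⟨W, hW⟩ := hpg.exists_le_sylow
      rw [Subsingleton.elim W Qb] at hW
      exact hW (Subgroup.mem_zpowers y)
    have hdisj : Disjoint (Pb : Subgroup Gq) (Qb : Subgroup Gq) := by
      rw [disjoint_iff]
      exact inf_eq_bot_of_coprime
        (by rw [cardPb Pb, cardQb]; exact (Nat.coprime_primes hp hq).mpr (by omega))
    have hcomm : Commute x y :=
      Subgroup.commute_of_normal_of_disjoint _ _ hPbn hQbn hdisj x y hxP hyQ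
    have hord : orderOf (x * y) = p * q := by
      rw [hcomm.orderOf_mul_eq_mul_orderOf_of_coprime
        (by rw [hx, hy]; exact (Nat.coprime_primes hp hq).mpr (by omega)), hx, hy]
    exact hnc (isCyclic_of_orderOf_eq_card (x * y) (by rw [hord, cardQuot]))
  · -- q Sylow p-subgroups : build a K₃,₃
    exfalso
    haveI : Fintype (Sylow p Gq) := Fintype.ofFinite _
    have hcard3 : Fintype.card (Fin 3) ≤ Fintype.card (Sylow p Gq) := by
      rw [Fintype.card_fin, ← Nat.card_eq_fintype_card, hnp]; omega
    obtain ⟨emb⟩ := Function.Embedding.nonempty_iff_card_le.mpr hcard3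
    set π := QuotientGroup.mk' (R : Subgroup G) with hπ
    have hsurj : Function.Surjective π := QuotientGroup.mk'_surjective _
    have hRle : ∀ W : Subgroup Gq, (R : Subgroup G) ≤ Subgroup.comap π W := by
      intro W x hx
      rw [Subgroup.mem_comap]
      have h1 : π x = 1 := by
        rw [hπ]
        exact (QuotientGroup.eq_one_iff x).mpr hx
      rw [h1]; exact W.one_mem
    have cardComap : ∀ W : Subgroup Gq, ∀ a : ℕ, W.index = a → a * Nat.card (Subgroup.comap π W) = p * q * r := by
      intro W a ha
      have h1 : (Subgroup.comap π W).index = a := by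
        rw [Subgroup.index_comap_of_surjective _ hsurj, ha]
      have h2 := Subgroup.card_mul_index (Subgroup.comap π W)
      rw [h1, hG] at h2
      rw [← h2]; ring
    have cardA : ∀ i, Nat.card (Subgroup.comap π ((emb i : Sylow p Gq) : Subgroup Gq)) = p * r := by
      intro i
      have h := cardComap _ q (hidxPb (emb i))
      exact Nat.eq_of_mul_eq_mul_left hq.pos (by rw [h]; ring)
    set Q' := Subgroup.comap π (Qb : Subgroup Gq) with hQ'
    have cardQ' : Nat.card Q' = q * r := by
      have h := cardComap _ p hidxQb
      exact Nat.eq_of_mul_eq_mul_left hp.pos (by rw [h]; ring)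
    -- complement of R via Schur-Zassenhaus
    have hidxR : (R : Subgroup G).index = p * q := by
      have h := Subgroup.card_mul_index (R : Subgroup G)
      rw [cardR, hG] at h
      exact Nat.eq_of_mul_eq_mul_left hr.pos (by rw [h]; ring)
    obtain ⟨Hc, hHc⟩ := Subgroup.exists_right_complement'_of_coprime
      (N := (R : Subgroup G))
      (by rw [cardR, hidxR]; exact (hr.coprime_iff_not_dvd).mpr crpq)
    have cardHc : Nat.card Hc = p * q := by
      have h := hHc.card_mul
      rw [cardR, hG] at h
      exact Nat.eq_of_mul_eq_mul_left hr.pos (by rw [h]; ring)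
    -- nontrivial intersections with the complement
    have hinf : ∀ W : Subgroup Gq, W ≠ ⊥ → Subgroup.comap π W ⊓ Hc ≠ ⊥ := by
      intro W hW
      obtain ⟨⟨w, hwW⟩, hw1⟩ := Subgroup.ne_bot_iff_exists_ne_one.mp hW
      have hwne : w ≠ 1 := fun h => hw1 (Subtype.ext h)
      obtain ⟨g, hg⟩ := hsurj w
      obtain ⟨uh, huh⟩ := hHc.2 g
      have huh' : (uh.1 : G) * (uh.2 : G) = g := huh
      have hπh : π (uh.2 : G) = w := by
        have h1 : π (uh.1 : G) = 1 := (QuotientGroup.eq_one_iff _).mpr uh.1.2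
        have h2 : π ((uh.1 : G) * (uh.2 : G)) = w := by rw [huh']; exact hg
        rwa [map_mul, h1, one_mul] at h2
      have hh1 : (uh.2 : G) ≠ 1 := by
        intro he
        rw [he, map_one] at hπh
        exact hwne hπh.symm
      rw [Subgroup.ne_bot_iff_exists_ne_one]
      refine ⟨⟨(uh.2 : G), Subgroup.mem_inf.mpr
        ⟨Subgroup.mem_comap.mpr (by rw [hπh]; exact hwW), uh.2.2⟩⟩, ?_⟩
      intro he
      exact hh1 (congrArg Subtype.val he)
    -- numeric facts
    have h1pq : 1 < p * q := by have := Nat.mul_le_mul hp2 hq2; omega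
    have h1pr : 1 < p * r := by have := Nat.mul_le_mul hp2 hr2; omega
    have h1qr : 1 < q * r := by have := Nat.mul_le_mul hq2 hr2; omega
    have hApqr : p * r < p * q * r :=
      mul_lt_mul_of_pos_right ((lt_mul_iff_one_lt_right hp.pos).mpr hq.one_lt) hr.pos
    have hQ'pqr : q * r < p * q * r := by
      have h := (lt_mul_iff_one_lt_left (show 0 < q * r by omega)).mpr hp.one_lt
      rwa [← mul_assoc] at h
    have hHcpqr : p * q < p * q * r :=
      (lt_mul_iff_one_lt_right (show 0 < p * q by omega)).mpr hr.one_lt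
    have hRpqr : r < p * q * r := (lt_mul_iff_one_lt_left hr.pos).mpr h1pq
    have hr_pr : r < p * r := (lt_mul_iff_one_lt_left hr.pos).mpr hp.one_lt
    have hpr_qr : p * r < q * r := mul_lt_mul_of_pos_right hpq hr.pos
    have hpq_pr : p * q < p * r := mul_lt_mul_of_pos_left hqr hp.pos
    have hr_qr : r < q * r := (lt_mul_iff_one_lt_left hr.pos).mpr hq.one_lt
    have hpq_qr : p * q < q * r := by
      have h := mul_lt_mul_of_pos_left (lt_trans hpq hqr) hq.pos
      rwa [mul_comm q p] at h
    have hrpq : r ≠ p * q := fun h => crpq (h ▸ dvd_rfl)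
    have hbotne : ∀ S : Subgroup G, (R : Subgroup G) ≤ S → S ≠ ⊥ := by
      intro S hS hbot
      rw [hbot, le_bot_iff] at hS
      have h1 : Nat.card ((R : Subgroup G)) = 1 := by rw [hS, Subgroup.card_bot]
      rw [cardR] at h1
      omega
    -- assemble the K₃,₃
    apply hfree
    refine ⟨fun i => Subgroup.comap π ((emb i : Sylow p Gq) : Subgroup Gq),
      ![(R : Subgroup G), Q', Hc], ?_, ?_, ?_, ?_, ?_, ?_⟩
    · intro i j hij
      exact emb.injective (Sylow.ext (Subgroup.comap_injective hsurj hij))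
    · exact vec3_inj (ne_of_card_ne (by rw [cardR, cardQ']; exact hr_qr.ne))
        (ne_of_card_ne (by rw [cardR, cardHc]; exact hrpq))
        (ne_of_card_ne (by rw [cardQ', cardHc]; exact hpq_qr.ne'))
    · intro i j
      refine vec3_cases ?_ ?_ ?_ j
      · exact ne_of_card_ne (by rw [cardA i, cardR]; exact hr_pr.ne')
      · exact ne_of_card_ne (by rw [cardA i, cardQ']; exact hpr_qr.ne)
      · exact ne_of_card_ne (by rw [cardA i, cardHc]; exact hpq_pr.ne')
    · intro i
      constructor
      · exact ne_of_card_ne (by rw [cardA i, Subgroup.card_bot]; omega)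
      · exact ne_of_card_ne (by rw [cardA i, Subgroup.card_top, hG]; exact hApqr.ne)
    · refine vec3_cases (P := fun S => S ≠ ⊥ ∧ S ≠ ⊤) ?_ ?_ ?_
      · exact ⟨ne_of_card_ne (by rw [cardR, Subgroup.card_bot]; omega),
          ne_of_card_ne (by rw [cardR, Subgroup.card_top, hG]; exact hRpqr.ne)⟩
      · exact ⟨ne_of_card_ne (by rw [cardQ', Subgroup.card_bot]; omega),
          ne_of_card_ne (by rw [cardQ', Subgroup.card_top, hG]; exact hQ'pqr.ne)⟩
      · exact ⟨ne_of_card_ne (by rw [cardHc, Subgroup.card_bot]; omega),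
          ne_of_card_ne (by rw [cardHc, Subgroup.card_top, hG]; exact hHcpqr.ne)⟩
    · intro i j
      refine vec3_cases (P := fun S =>
        Subgroup.comap π ((emb i : Sylow p Gq) : Subgroup Gq) ⊓ S ≠ ⊥) ?_ ?_ ?_ j
      · exact hbotne _ (le_inf (hRle _) le_rfl)
      · exact hbotne _ (le_inf (hRle _) (hRle _))
      · exact hinf _ (ne_of_card_ne (by rw [cardPb (emb i), Subgroup.card_bot]; omega))

section Main

variable {G : Type*} [Group G] [Fintype G]

private lemma sylow_r_normal {p q r : ℕ} (hp : p.Prime) (hq : q.Prime) (hr : r.Prime)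
    (hpq : p < q) (hqr : q < r) (hcard : Fintype.card G = p * q * r) :
    ∀ R : Sylow r G, (R : Subgroup G).Normal := by
  haveI fp : Fact p.Prime := ⟨hp⟩
  haveI fq : Fact q.Prime := ⟨hq⟩
  haveI fr : Fact r.Prime := ⟨hr⟩
  have hp2 := hp.two_le
  have hq2 := hq.two_le
  have hr2 := hr.two_le
  have hG : Nat.card G = p * q * r := by rw [Nat.card_eq_fintype_card, hcard]
  have crpq : ¬ r ∣ p * q := by
    intro h
    rcases hr.dvd_mul.mp h with h | h
    · exact absurd (Nat.le_of_dvd hp.pos h) (by omega)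
    · exact absurd (Nat.le_of_dvd hq.pos h) (by omega)
  have cpqr : ¬ p ∣ q * r := by
    intro h
    rcases hp.dvd_mul.mp h with h | h
    · exact absurd ((Nat.prime_dvd_prime_iff_eq hp hq).mp h) (by omega)
    · exact absurd ((Nat.prime_dvd_prime_iff_eq hp hr).mp h) (by omega)
  have crq : ¬ r ∣ q := fun h => absurd (Nat.le_of_dvd hq.pos h) (by omega)
  -- a Sylow p-subgroup
  obtain ⟨P⟩ : Nonempty (Sylow p G) := inferInstance
  have cardP : Nat.card (P : Subgroup G) = p :=
    sylow_card_of_mul (by rw [hG]; ring) cpqr P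
  -- Burnside's hypothesis
  have hP : (Subgroup.normalizer ((P : Subgroup G) : Set G)) ≤ Subgroup.centralizer (P : Set G) := by
    intro g hg
    haveI : IsCyclic (P : Subgroup G) := isCyclic_of_prime_card cardP
    set x : ((Subgroup.normalizer ((P : Subgroup G) : Set G))) := ⟨g, hg⟩ with hx
    set σ := (P : Subgroup G).normalizerMonoidHom x with hσ
    have h1 : orderOf σ ∣ p - 1 := by
      have h := orderOf_dvd_natCard σ
      rwa [IsCyclic.card_mulAut, cardP, Nat.totient_prime hp] at h
    have h2 : orderOf σ ∣ p * q * r := by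
      refine (orderOf_map_dvd _ x).trans ((orderOf_dvd_natCard x).trans ?_)
      rw [← hG]; exact Subgroup.card_subgroup_dvd_card _
    have hco : Nat.Coprime (p - 1) (p * q * r) := by
      have c1 : Nat.Coprime (p - 1) p := by
        have h : 1 + (p - 1) = p := by omega
        have c := Nat.coprime_add_self_right.mpr (Nat.coprime_one_right (p - 1))
        rwa [h] at c
      have c2 : Nat.Coprime (p - 1) q :=
        Nat.Coprime.symm ((hq.coprime_iff_not_dvd).mpr
          (fun h => absurd (Nat.le_of_dvd (by omega) h) (by omega)))
      have c3 : Nat.Coprime (p - 1) r :=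
        Nat.Coprime.symm ((hr.coprime_iff_not_dvd).mpr
          (fun h => absurd (Nat.le_of_dvd (by omega) h) (by omega)))
      exact (c1.mul_right c2).mul_right c3
    have hone : orderOf σ = 1 := by
      have h := Nat.dvd_gcd h1 h2
      rw [Nat.Coprime] at hco
      rw [hco] at h
      exact Nat.dvd_one.mp h
    have hσ1 : σ = 1 := orderOf_eq_one_iff.mp hone
    have hmem : x ∈ (Subgroup.centralizer ((P : Subgroup G) : Set G)).subgroupOf
        (Subgroup.normalizer ((P : Subgroup G) : Set G)) := by
      rw [← Subgroup.normalizerMonoidHom_ker]; exact hσ1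
    exact Subgroup.mem_subgroupOf.mp hmem
  -- Burnside's normal p-complement theorem
  set K := (MonoidHom.transferSylow P hP).ker with hKdef
  have hcompl := MonoidHom.ker_transferSylow_isComplement' P hP
  have cardK : Nat.card K = q * r := by
    have h := hcompl.card_mul
    rw [cardP, hG] at h
    exact Nat.eq_of_mul_eq_mul_right hp.pos (by rw [h]; ring)
  -- the Sylow r-subgroup of K
  obtain ⟨S⟩ : Nonempty (Sylow r K) := inferInstance
  have cardS : Nat.card (S : Subgroup K) = r :=
    sylow_card_of_mul (by rw [cardK]; ring) crq S
  set R₀ : Subgroup G := (S : Subgroup K).map K.subtype with hR₀def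
  have hR₀K : R₀ ≤ K := map_subtype_le _
  have cardR₀ : Nat.card R₀ = r :=
    (Nat.card_congr ((Subgroup.equivMapOfInjective (S : Subgroup K) K.subtype
      K.subtype_injective).toEquiv)).symm.trans cardS
  -- uniqueness of order-r subgroups inside K
  have hidx : (S : Subgroup K).index = q := by
    have h := Subgroup.card_mul_index (S : Subgroup K)
    rw [cardS, cardK] at h
    exact Nat.eq_of_mul_eq_mul_left hr.pos (by rw [mul_comm r q]; exact h)
  have hone : Nat.card (Sylow r K) = 1 := by
    have hdvd := S.card_dvd_index
    rw [hidx] at hdvd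
    rcases hq.eq_one_or_self_of_dvd _ hdvd with h | h
    · exact h
    · exfalso
      have hmod := card_sylow_modEq_one r K
      rw [h] at hmod
      have hd := (Nat.modEq_iff_dvd' (by omega : 1 ≤ q)).mp hmod.symm
      have := Nat.le_of_dvd (by omega) hd
      omega
  haveI : Subsingleton (Sylow r K) := (Nat.card_eq_one_iff_unique.mp hone).1
  have hfacK : (Nat.card K).factorization r = 1 := by
    rw [cardK, Nat.factorization_mul hq.ne_zero hr.ne_zero, hr.factorization,
      hq.factorization]
    simp [Finsupp.single_apply, (show ¬ q = r by omega)]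
  have huniq : ∀ T : Subgroup G, T ≤ K → Nat.card T = r → T = R₀ := by
    intro T hTK hTr
    have hT' : Nat.card (T.subgroupOf K) = r := by
      rw [Nat.card_congr (Subgroup.subgroupOfEquivOfLe hTK).toEquiv]; exact hTr
    have hTS : Sylow.ofCard (T.subgroupOf K) (by rw [hT', hfacK, pow_one]) = S :=
      Subsingleton.elim _ _
    have h := congrArg (fun W : Sylow r K => (W : Subgroup K).map K.subtype) hTS
    simp only [Sylow.coe_ofCard] at h
    rwa [Subgroup.subgroupOf_map_subtype, inf_eq_left.mpr hTK] at h
  -- R₀ is normal in G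
  have hsmulK : ∀ g : G, MulAut.conj g • R₀ ≤ K := by
    intro g x hx
    rw [Subgroup.mem_pointwise_smul_iff_inv_smul_mem] at hx
    simp only [MulAut.smul_def, MulAut.conj_inv_apply] at hx
    have hxK := hR₀K hx
    have h2 := (MonoidHom.normal_ker _).conj_mem _ hxK g
    simpa [mul_assoc, hKdef] using h2
  have hR₀n : R₀.Normal := by
    constructor
    intro n hn g
    have hconj : MulAut.conj g • R₀ = R₀ :=
      huniq _ (hsmulK g)
        ((Nat.card_congr (Subgroup.equivSMul (MulAut.conj g) R₀).toEquiv).symm.trans cardR₀)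
    rw [← hconj]
    simpa [MulAut.smul_def, MulAut.conj_apply] using
      (Subgroup.smul_mem_pointwise_smul_iff (a := MulAut.conj g) (S := R₀) (x := n)).mpr hn
  -- every Sylow r-subgroup equals R₀
  intro R
  have facGr : (Nat.card G).factorization r = 1 := by
    rw [hG, Nat.factorization_mul (Nat.mul_ne_zero hp.ne_zero hq.ne_zero) hr.ne_zero,
      hr.factorization]
    simp [Nat.factorization_eq_zero_of_not_dvd crpq]
  let R₀' : Sylow r G := Sylow.ofCard R₀ (by rw [cardR₀, facGr, pow_one])
  haveI hn' : (R₀' : Subgroup G).Normal := hR₀n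
  obtain ⟨g, hg⟩ := MulAction.exists_smul_eq G R₀' R
  have hRR : (R : Subgroup G) = R₀ := by
    rw [← hg, Sylow.coe_subgroup_smul, Subgroup.Normal.conj_smul_eq_self]
    rfl
  rw [hRR]
  exact hR₀n

set_option maxHeartbeats 1000000 in
private lemma inter_trivial {G : Type*} [Group G] [Fintype G] {p q r : ℕ}
    (hp : p.Prime) (hq : q.Prime) (hr : r.Prime)
    (hpq : p < q) (hqr : q < r) (hcard : Fintype.card G = p * q * r)
    (hnotnil : ¬ Group.IsNilpotent G) (hfree : IsK33Free G) :
    ∀ H K : Subgroup G, Nat.card H = p * q → Nat.card K = p * q →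
      H ≠ K → H ⊓ K = ⊥ := by
  intro H K hH hK hHK
  by_contra hD
  haveI fp : Fact p.Prime := ⟨hp⟩
  haveI fq : Fact q.Prime := ⟨hq⟩
  haveI fr : Fact r.Prime := ⟨hr⟩
  have hp2 := hp.two_le
  have hq2 := hq.two_le
  have hr2 := hr.two_le
  have hG : Nat.card G = p * q * r := by rw [Nat.card_eq_fintype_card, hcard]
  have crpq : ¬ r ∣ p * q := by
    intro h
    rcases hr.dvd_mul.mp h with h | h
    · exact absurd (Nat.le_of_dvd hp.pos h) (by omega)
    · exact absurd (Nat.le_of_dvd hq.pos h) (by omega)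
  have cpq_r : Nat.Coprime (p * q) r :=
    Nat.Coprime.mul ((Nat.coprime_primes hp hr).mpr (by omega))
      ((Nat.coprime_primes hq hr).mpr (by omega))
  have h1pq : 1 < p * q := by have := Nat.mul_le_mul hp2 hq2; omega
  have hHcpqr : p * q < p * q * r :=
    (lt_mul_iff_one_lt_right (show 0 < p * q by omega)).mpr hr.one_lt
  obtain ⟨R⟩ : Nonempty (Sylow r G) := inferInstance
  haveI hRn : (R : Subgroup G).Normal := sylow_r_normal hp hq hr hpq hqr hcard R
  have cardR : Nat.card (R : Subgroup G) = r :=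
    sylow_card_of_mul (by rw [hG]; ring) crpq R
  obtain ⟨hcyc, cardQuot⟩ := quotient_parts hp hq hr hpq hqr hcard hfree R
  -- every subgroup of order pq is cyclic
  have hcycSub : ∀ L : Subgroup G, Nat.card L = p * q → IsCyclic L := by
    intro L hL
    have hinfL : L ⊓ (R : Subgroup G) = ⊥ :=
      inf_eq_bot_of_coprime (by rw [hL, cardR]; exact cpq_r)
    set f := (QuotientGroup.mk' (R : Subgroup G)).comp L.subtype with hf
    have hker : f.ker = ⊥ := by
      rw [eq_bot_iff]
      intro x hx
      have hx1 : ((x : G) : G ⧸ (R : Subgroup G)) = 1 := hx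
      have hxR : (x : G) ∈ (R : Subgroup G) := (QuotientGroup.eq_one_iff _).mp hx1
      have hmem : (x : G) ∈ L ⊓ (R : Subgroup G) := ⟨x.2, hxR⟩
      rw [hinfL, Subgroup.mem_bot] at hmem
      rw [Subgroup.mem_bot]
      exact Subtype.ext hmem
    have hinj : Function.Injective f := (MonoidHom.ker_eq_bot_iff f).mp hker
    haveI := hcyc
    haveI : IsCyclic f.range := Subgroup.isCyclic f.range
    exact isCyclic_of_surjective (MonoidHom.ofInjective hinj).symm
      (MonoidHom.ofInjective hinj).symm.surjective
  have hHcyc := hcycSub H hH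
  have hKcyc := hcycSub K hK
  -- elements of a cyclic subgroup commute
  have hcommSub : ∀ L : Subgroup G, IsCyclic L → ∀ x y : G, x ∈ L → y ∈ L → Commute x y := by
    intro L hc x y hx hy
    letI : CommGroup L := IsCyclic.commGroup
    have h := mul_comm (⟨x, hx⟩ : L) (⟨y, hy⟩ : L)
    exact congrArg Subtype.val h
  set D := H ⊓ K with hDdef
  have hDleH : D ≤ H := inf_le_left
  -- cyclic overgroups normalize D
  have hnormalizer : ∀ L : Subgroup G, IsCyclic L → D ≤ L → L ≤ (Subgroup.normalizer (D : Set G)) := by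
    intro L hLc hDL g hgL
    rw [Subgroup.mem_normalizer_iff]
    intro h
    constructor
    · intro hh
      have hc := hcommSub L hLc g h hgL (hDL hh)
      have he : g * h * g⁻¹ = h := by rw [hc.eq, mul_inv_cancel_right]
      rwa [he]
    · intro hh
      have hhL : h ∈ L := by
        have h1 : g * h * g⁻¹ ∈ L := hDL hh
        have h2 : g⁻¹ * (g * h * g⁻¹) * g = h := by group
        rw [← h2]
        exact mul_mem (mul_mem (inv_mem hgL) h1) hgL
      have hc := hcommSub L hLc g h hgL hhL
      have he : g * h * g⁻¹ = h := by rw [hc.eq, mul_inv_cancel_right]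
      rwa [he] at hh
  have hHN : H ≤ (Subgroup.normalizer (D : Set G)) := hnormalizer H hHcyc inf_le_left
  have hKN : K ≤ (Subgroup.normalizer (D : Set G)) := hnormalizer K hKcyc inf_le_right
  -- dichotomy for overgroups of an order-pq subgroup
  have hdich : ∀ L M : Subgroup G, Nat.card L = p * q → L ≤ M → M = L ∨ M = ⊤ := by
    intro L M hL hLM
    have h1 : p * q ∣ Nat.card M := hL ▸ Subgroup.card_dvd_of_le hLM
    have h2 : Nat.card M ∣ p * q * r := hG ▸ Subgroup.card_subgroup_dvd_card M
    obtain ⟨m, hm⟩ := h1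
    have hmr : m ∣ r := by
      have h3 : p * q * m ∣ p * q * r := by rw [← hm]; exact h2
      exact (Nat.mul_dvd_mul_iff_left (show 0 < p * q by omega)).mp h3
    rcases hr.eq_one_or_self_of_dvd m hmr with h | h
    · left
      exact (Subgroup.eq_of_le_of_card_ge hLM (by rw [hL, hm, h, mul_one])).symm
    · right
      apply Subgroup.eq_top_of_card_eq
      rw [hm, h, hG]
  -- D is normal in G
  haveI hDn : D.Normal := by
    rcases hdich H (Subgroup.normalizer (D : Set G)) hH hHN with h | h
    · exfalso
      have hKH : K ≤ H := h ▸ hKN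
      exact hHK (Subgroup.eq_of_le_of_card_ge hKH (by rw [hH, hK])).symm
    · exact Subgroup.normalizer_eq_top_iff.mp h
  have hDcard_ne : Nat.card D ≠ p * q := by
    intro hDc
    have h1 : D = H := Subgroup.eq_of_le_of_card_ge inf_le_left (by rw [hH, hDc])
    have h2 : D = K := Subgroup.eq_of_le_of_card_ge inf_le_right (by rw [hK, hDc])
    exact hHK (h1.symm.trans h2)
  rcases hdich H (Subgroup.normalizer (H : Set G)) hH Subgroup.le_normalizer with hM | hM
  · -- H is self-normalizing : it has r ≥ 5 conjugates, all containing D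
    have hidxN : (Subgroup.normalizer (H : Set G)).index = r := by
      rw [hM]
      have h := Subgroup.card_mul_index H
      rw [hH, hG] at h
      exact Nat.eq_of_mul_eq_mul_left (show 0 < p * q by omega) h
    have hr5 : 5 ≤ r := by
      have h4 : r ≠ 4 := by rintro rfl; norm_num at hr
      omega
    haveI : Fintype (G ⧸ (Subgroup.normalizer (H : Set G))) := Fintype.ofFinite _
    have hcard5 : Fintype.card (Fin 5) ≤ Fintype.card (G ⧸ (Subgroup.normalizer (H : Set G))) := by
      rw [Fintype.card_fin, ← Nat.card_eq_fintype_card, ← Subgroup.index_eq_card, hidxN]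
      exact hr5
    obtain ⟨emb⟩ := Function.Embedding.nonempty_iff_card_le.mpr hcard5
    set g : Fin 5 → G := fun i => Quotient.out (emb i) with hgdef
    set C : Fin 5 → Subgroup G := fun i => MulAut.conj (g i) • H with hCdef
    have hCcard : ∀ i, Nat.card (C i) = p * q := fun i =>
      (Nat.card_congr (Subgroup.equivSMul (MulAut.conj (g i)) H).toEquiv).symm.trans hH
    have hDC : ∀ i, D ≤ C i := by
      intro i x hx
      have h1 : MulAut.conj (g i) • D = D := Subgroup.Normal.conj_smul_eq_self _ _
      rw [← h1] at hx
      have h2 := Subgroup.mem_pointwise_smul_iff_inv_smul_mem.mp hx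
      exact Subgroup.mem_pointwise_smul_iff_inv_smul_mem.mpr (hDleH h2)
    have hCinj : Function.Injective C := by
      intro i j hij
      have key : (g j)⁻¹ * (g i) ∈ (Subgroup.normalizer (H : Set G)) := by
        rw [Subgroup.mem_normalizer_iff]
        intro h
        constructor
        · intro hh
          have h1 : MulAut.conj (g i) h ∈ MulAut.conj (g i) • H :=
            Subgroup.smul_mem_pointwise_smul _ _ _ hh
          rw [show MulAut.conj (g i) • H = C i from rfl, hij] at h1
          have h2 := Subgroup.mem_pointwise_smul_iff_inv_smul_mem.mp h1
          simpa [MulAut.smul_def, MulAut.conj_apply, MulAut.conj_inv_apply,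
            mul_assoc, mul_inv_rev] using h2
        · intro hh
          have h1 : MulAut.conj (g j) (((g j)⁻¹ * (g i)) * h * (((g j)⁻¹ * (g i)))⁻¹)
              ∈ MulAut.conj (g j) • H := Subgroup.smul_mem_pointwise_smul _ _ _ hh
          rw [show MulAut.conj (g j) • H = C j from rfl, ← hij] at h1
          have h2 := Subgroup.mem_pointwise_smul_iff_inv_smul_mem.mp h1
          simpa [MulAut.smul_def, MulAut.conj_apply, MulAut.conj_inv_apply,
            mul_assoc, mul_inv_rev] using h2
      have hq' : ((g j : G) : G ⧸ (Subgroup.normalizer (H : Set G))) = ((g i : G) : G ⧸ (Subgroup.normalizer (H : Set G))) :=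
        (QuotientGroup.eq).mpr key
      have houti : ((g i : G) : G ⧸ (Subgroup.normalizer (H : Set G))) = emb i := (emb i).out_eq'
      have houtj : ((g j : G) : G ⧸ (Subgroup.normalizer (H : Set G))) = emb j := (emb j).out_eq'
      exact (emb.injective (houtj ▸ houti ▸ hq')).symm
    have hCne : ∀ i j : Fin 5, i ≠ j → C i ≠ C j := fun i j hne h => hne (hCinj h)
    have hDneC : ∀ i, C i ≠ D := fun i h => hDcard_ne (by rw [← h, hCcard i])
    have hDnetop : D ≠ ⊤ := by
      intro h
      have h1 : Nat.card D ∣ p * q := hH ▸ Subgroup.card_dvd_of_le inf_le_left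
      rw [h, Subgroup.card_top, hG] at h1
      exact absurd (Nat.le_of_dvd (by omega) h1) (by omega)
    have hDbotle : ∀ S : Subgroup G, D ≤ S → S ≠ ⊥ := by
      intro S hS hb
      rw [hb, le_bot_iff] at hS
      exact hD hS
    have hCbt : ∀ i : Fin 5, C i ≠ ⊥ ∧ C i ≠ ⊤ := fun i =>
      ⟨ne_of_card_ne (by rw [hCcard i, Subgroup.card_bot]; omega),
        ne_of_card_ne (by rw [hCcard i, Subgroup.card_top, hG]; exact hHcpqr.ne)⟩
    apply hfree
    refine ⟨![C 0, C 1, C 2], ![C 3, C 4, D], ?_, ?_, ?_, ?_, ?_, ?_⟩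
    · exact vec3_inj (hCne 0 1 (by decide)) (hCne 0 2 (by decide)) (hCne 1 2 (by decide))
    · exact vec3_inj (hCne 3 4 (by decide)) (hDneC 3) (hDneC 4)
    · refine vec3_cases (P := fun S => ∀ j : Fin 3, S ≠ ![C 3, C 4, D] j) ?_ ?_ ?_
      · exact vec3_cases (P := fun T => C 0 ≠ T)
          (hCne 0 3 (by decide)) (hCne 0 4 (by decide)) (hDneC 0)
      · exact vec3_cases (P := fun T => C 1 ≠ T)
          (hCne 1 3 (by decide)) (hCne 1 4 (by decide)) (hDneC 1)
      · exact vec3_cases (P := fun T => C 2 ≠ T)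
          (hCne 2 3 (by decide)) (hCne 2 4 (by decide)) (hDneC 2)
    · exact vec3_cases (P := fun S => S ≠ ⊥ ∧ S ≠ ⊤) (hCbt 0) (hCbt 1) (hCbt 2)
    · exact vec3_cases (P := fun S => S ≠ ⊥ ∧ S ≠ ⊤) (hCbt 3) (hCbt 4) ⟨hD, hDnetop⟩
    · refine vec3_cases (P := fun S => ∀ j : Fin 3, S ⊓ ![C 3, C 4, D] j ≠ ⊥) ?_ ?_ ?_ <;>
        refine vec3_cases (P := fun T => _ ⊓ T ≠ ⊥) ?_ ?_ ?_ <;>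
        first
          | exact hDbotle _ (le_inf (by simp [hDC]) (by simp [hDC]))
          | exact hDbotle _ (le_inf (hDC _) le_rfl)
  · -- H is normal : G is abelian, contradicting non-nilpotency
    have hHn : H.Normal := Subgroup.normalizer_eq_top_iff.mp hM
    have hcompl : Subgroup.IsComplement' (R : Subgroup G) H :=
      Subgroup.isComplement'_of_coprime (by rw [cardR, hH, hG]; ring)
        (by rw [cardR, hH]; exact cpq_r.symm)
    have hdisj : Disjoint (R : Subgroup G) H :=
      disjoint_iff.mpr (inf_eq_bot_of_coprime (by rw [cardR, hH]; exact cpq_r.symm))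
    have hcommRH := Subgroup.commute_of_normal_of_disjoint _ _ hRn hHn hdisj
    have hRcyc : IsCyclic (R : Subgroup G) := isCyclic_of_prime_card cardR
    have hcomm : ∀ a b : G, a * b = b * a := by
      intro a b
      obtain ⟨x, hx⟩ := hcompl.2 a
      obtain ⟨y, hy⟩ := hcompl.2 b
      have hx' : (x.1 : G) * (x.2 : G) = a := hx
      have hy' : (y.1 : G) * (y.2 : G) = b := hy
      have c1 : Commute (x.1 : G) (y.1 : G) := hcommSub _ hRcyc _ _ x.1.2 y.1.2
      have c2 : Commute (x.2 : G) (y.2 : G) := hcommSub _ hHcyc _ _ x.2.2 y.2.2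
      have c3 : Commute (x.2 : G) (y.1 : G) := (hcommRH _ _ y.1.2 x.2.2).symm
      have c4 : Commute (x.1 : G) (y.2 : G) := hcommRH _ _ x.1.2 y.2.2
      have cAB : Commute ((x.1 : G) * (x.2 : G)) ((y.1 : G) * (y.2 : G)) :=
        (c1.mul_right c4).mul_left (c3.mul_right c2)
      rw [← hx', ← hy']
      exact cAB.eq
    exact hnotnil ⟨⟨1, by
      rw [Subgroup.upperCentralSeries_one, eq_top_iff']
      intro x
      rw [Subgroup.mem_center_iff]
      exact fun b => hcomm b x⟩⟩

end Main

/-- if `G` is a non-nilpotent `K₃,₃`-free group of order `pqr`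
with primes `p < q < r`, then every Sylow `r`-subgroup `R` is normal, `G/R` is
cyclic of order `pq`, and any two distinct subgroups of order `pq` intersect
trivially. -/
theorem stmt_18 (G : Type*) [Group G] [Fintype G]
    (p q r : ℕ) (hp : p.Prime) (hq : q.Prime) (hr : r.Prime)
    (hpq : p < q) (hqr : q < r)
    (hcard : Fintype.card G = p * q * r)
    (hnotnil : ¬ Group.IsNilpotent G) (hfree : IsK33Free G) :
    (∀ R : Sylow r G, (R : Subgroup G).Normal) ∧
    (∀ R : Sylow r G, ∀ [(R : Subgroup G).Normal],
        IsCyclic (G ⧸ (R : Subgroup G)) ∧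
        Nat.card (G ⧸ (R : Subgroup G)) = p * q) ∧
    (∀ H K : Subgroup G, Nat.card H = p * q → Nat.card K = p * q →
        H ≠ K → H ⊓ K = ⊥) := by
  refine ⟨sylow_r_normal hp hq hr hpq hqr hcard, ?_, ?_⟩
  · intro R hRn
    exact quotient_parts hp hq hr hpq hqr hcard hfree R
  · exact inter_trivial hp hq hr hpq hqr hcard hnotnil hfree
end
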